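/- arXiv:1709.08194 — 7 statements merged into one kernel-verified Lean document; each statement's English description precedes it below -/
import Mathlib

section
/- Let A be the (M+1)×(M+1) real symmetric tridiagonal matrix with zero diagonal and subdiagonal entries √1, √2, ..., √M, and let H = diag(h_0,...,h_M) with h_j ≤ 0 for all j and h_M < 0. Then for every nonzero integer m and real k ≠ 0, every eigenvalue of the matrix A_m = -i·m·k·A + H has strictly negative real part. -/
/-- The `(M+1) × (M+1)` Jacobi matrix of the (normalized, probabilists') Hermite
polynomials: zero diagonal and sub/super-diagonal entries `√1, √2, …, √M`. -/
noncomputable def hermiteJacobi (M : ℕ) : Matrix (Fin (M + 1)) (Fin (M + 1)) ℝ :=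
  fun i j =>
    if (i : ℕ) + 1 = (j : ℕ) then Real.sqrt ((i : ℕ) + 1)
    else if (j : ℕ) + 1 = (i : ℕ) then Real.sqrt ((j : ℕ) + 1) else 0

lemma hermiteJacobi_symm (M : ℕ) (i j : Fin (M + 1)) :
    hermiteJacobi M i j = hermiteJacobi M j i := by
  unfold hermiteJacobi
  split_ifs <;> first | rfl | omega

lemma exists_eigenvector' {n : Type*} [Fintype n] [DecidableEq n]
    (B : Matrix n n ℂ) (μ : ℂ) (hμ : B.charpoly.IsRoot μ) :
    ∃ v : n → ℂ, v ≠ 0 ∧ B.mulVec v = μ • v := by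
  have hdet : (Matrix.diagonal (fun _ : n => μ) - B).det = 0 := by
    have h2 := hμ
    rw [Matrix.charpoly, Polynomial.IsRoot, ← Polynomial.coe_evalRingHom,
      RingHom.map_det] at h2
    convert h2 using 2
    ext i j
    rcases eq_or_ne i j with rfl | hij
    · simp [Matrix.charmatrix_apply_eq]
    · simp [Matrix.charmatrix_apply_ne _ _ _ hij, Matrix.diagonal_apply_ne _ hij]
  obtain ⟨v, hv0, hv⟩ := (Matrix.exists_mulVec_eq_zero_iff).2 hdet
  refine ⟨v, hv0, ?_⟩
  rw [Matrix.sub_mulVec, sub_eq_zero] at hv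
  funext i
  have := congrFun hv.symm i
  simpa [Matrix.mulVec_diagonal] using this

lemma hermite_rowsum (M : ℕ) (v : Fin (M + 1) → ℂ) (i : Fin (M + 1)) :
    ∑ j, ((hermiteJacobi M).map Complex.ofReal) i j * v j =
      (Real.sqrt ((i : ℕ) + 1) : ℂ) *
        (if hlt : (i : ℕ) + 1 < M + 1 then v ⟨(i : ℕ) + 1, hlt⟩ else 0) +
      (Real.sqrt (i : ℕ) : ℂ) * v ⟨(i : ℕ) - 1, by omega⟩ := by
  have hsplit : ∀ j : Fin (M + 1), ((hermiteJacobi M).map Complex.ofReal) i j * v j =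
      (if (j : ℕ) = (i : ℕ) + 1 then (Real.sqrt ((i : ℕ) + 1) : ℂ) * v j else 0) +
      (if (j : ℕ) + 1 = (i : ℕ) then (Real.sqrt ((i : ℕ)) : ℂ) * v j else 0) := by
    intro j
    simp only [Matrix.map_apply, hermiteJacobi]
    by_cases h1 : (i : ℕ) + 1 = (j : ℕ)
    · rw [if_pos h1, if_pos (by omega), if_neg (by omega), add_zero]
    · rw [if_neg h1, if_neg (by omega : ¬((j : ℕ) = (i : ℕ) + 1)), zero_add]
      by_cases h2 : (j : ℕ) + 1 = (i : ℕ)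
      · rw [if_pos h2, if_pos h2]
        have hc : ((j : ℕ) : ℝ) + 1 = ((i : ℕ) : ℝ) := by exact_mod_cast h2
        rw [hc]
      · rw [if_neg h2, if_neg h2]
        simp
  rw [Finset.sum_congr rfl (fun j _ => hsplit j), Finset.sum_add_distrib]
  congr 1
  · by_cases hlt : (i : ℕ) + 1 < M + 1
    · rw [dif_pos hlt, Finset.sum_eq_single (⟨(i : ℕ) + 1, hlt⟩ : Fin (M + 1))]
      · simp
      · intro j _ hj
        rw [if_neg]
        exact fun hc => hj (Fin.ext hc)
      · simp
    · rw [dif_neg hlt, mul_zero]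
      apply Finset.sum_eq_zero
      intro j _
      rw [if_neg]
      have := j.isLt; omega
  · by_cases hpos : 0 < (i : ℕ)
    · rw [Finset.sum_eq_single (⟨(i : ℕ) - 1, by omega⟩ : Fin (M + 1))]
      · rw [if_pos (by simp; omega)]
      · intro j _ hj
        rw [if_neg]
        intro hc
        exact hj (Fin.ext (by simp; omega))
      · simp
    · have hi0 : (i : ℕ) = 0 := by omega
      rw [Finset.sum_eq_zero (fun j _ => if_neg (by omega))]
      simp [hi0]

/-- With `A` the Hermite Jacobi matrix and `H = diag(h₀,…,h_M)` negative
semidefinite with `h_M < 0`, for every nonzero integer `m` and real `k ≠ 0`, every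
eigenvalue of `A_m = -i·m·k·A + H` has strictly negative real part. -/
theorem eigenvalue_re_neg_of_filtered_hermite_jacobi
    (M : ℕ) (h : Fin (M + 1) → ℝ) (hh : ∀ j, h j ≤ 0) (hlast : h (Fin.last M) < 0)
    (m : ℤ) (hm : m ≠ 0) (k : ℝ) (hk : k ≠ 0) (μ : ℂ)
    (hμ : ((-(Complex.I * (m : ℂ) * (k : ℂ))) • (hermiteJacobi M).map Complex.ofReal +
        Matrix.diagonal fun j => ((h j : ℝ) : ℂ)).charpoly.IsRoot μ) :
    μ.re < 0 := by
  classical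
  set c : ℂ := -(Complex.I * (m : ℂ) * (k : ℂ)) with hc
  obtain ⟨v, hv0, hv⟩ := exists_eigenvector' _ μ hμ
  have hrow : ∀ i : Fin (M + 1),
      c * (∑ j, ((hermiteJacobi M).map Complex.ofReal) i j * v j) + (h i : ℂ) * v i
        = μ * v i := by
    intro i
    have h1 := congrFun hv i
    rw [Matrix.add_mulVec, Matrix.smul_mulVec] at h1
    simp only [Pi.add_apply, Pi.smul_apply, Matrix.mulVec_diagonal, smul_eq_mul,
      Matrix.mulVec, dotProduct] at h1
    simpa [Matrix.diagonal_apply, ite_mul] using h1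
  -- positivity of the norm
  set S : ℝ := ∑ i, Complex.normSq (v i) with hSdef
  have hS : 0 < S := by
    have hex : ∃ i, v i ≠ 0 := by
      by_contra hcon
      push_neg at hcon
      exact hv0 (funext hcon)
    obtain ⟨i0, hi0⟩ := hex
    exact Finset.sum_pos' (fun i _ => Complex.normSq_nonneg _)
      ⟨i0, Finset.mem_univ _, Complex.normSq_pos.2 hi0⟩
  -- the quadratic form of A is real
  set T : ℂ := ∑ i, ∑ j,
      (starRingEnd ℂ) (v i) * (((hermiteJacobi M).map Complex.ofReal) i j * v j) with hT
  have hTim : T.im = 0 := by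
    rw [← Complex.conj_eq_iff_im, hT, map_sum]
    rw [Finset.sum_comm]
    refine Finset.sum_congr rfl fun i _ => ?_
    rw [map_sum]
    refine Finset.sum_congr rfl fun j _ => ?_
    simp only [map_mul, Complex.conj_conj, Matrix.map_apply, Complex.conj_ofReal]
    rw [hermiteJacobi_symm M j i]
    ring
  -- energy identity
  have key : c * T + ((∑ i, h i * Complex.normSq (v i) : ℝ) : ℂ) = μ * (S : ℂ) := by
    have h1 : ∑ i, (starRingEnd ℂ) (v i) *
        (c * (∑ j, ((hermiteJacobi M).map Complex.ofReal) i j * v j) + (h i : ℂ) * v i)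
        = ∑ i, (starRingEnd ℂ) (v i) * (μ * v i) :=
      Finset.sum_congr rfl fun i _ => by rw [hrow i]
    have hconj : ∀ i : Fin (M + 1), (starRingEnd ℂ) (v i) * v i = (Complex.normSq (v i) : ℂ) :=
      fun i => by rw [mul_comm, Complex.mul_conj]
    have hexp : ∀ i : Fin (M + 1), (starRingEnd ℂ) (v i) *
        (c * (∑ j, ((hermiteJacobi M).map Complex.ofReal) i j * v j) + (h i : ℂ) * v i)
        = c * (∑ j, (starRingEnd ℂ) (v i) *
            (((hermiteJacobi M).map Complex.ofReal) i j * v j))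
          + (h i : ℂ) * (Complex.normSq (v i) : ℂ) := by
      intro i
      have e1 : ∑ j, (starRingEnd ℂ) (v i) *
          (((hermiteJacobi M).map Complex.ofReal) i j * v j)
          = (starRingEnd ℂ) (v i) * ∑ j, ((hermiteJacobi M).map Complex.ofReal) i j * v j :=
        (Finset.mul_sum _ _ _).symm
      rw [e1, ← hconj i]
      ring
    calc c * T + ((∑ i, h i * Complex.normSq (v i) : ℝ) : ℂ)
        = ∑ i, (c * (∑ j, (starRingEnd ℂ) (v i) *
            (((hermiteJacobi M).map Complex.ofReal) i j * v j))
          + (h i : ℂ) * (Complex.normSq (v i) : ℂ)) := by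
          rw [hT, Finset.mul_sum]
          push_cast
          rw [← Finset.sum_add_distrib]
      _ = ∑ i, (starRingEnd ℂ) (v i) *
            (c * (∑ j, ((hermiteJacobi M).map Complex.ofReal) i j * v j) + (h i : ℂ) * v i) :=
          Finset.sum_congr rfl fun i _ => (hexp i).symm
      _ = ∑ i, (starRingEnd ℂ) (v i) * (μ * v i) := h1
      _ = μ * (S : ℂ) := by
          rw [hSdef]
          push_cast
          rw [Finset.mul_sum]
          refine Finset.sum_congr rfl fun i _ => ?_
          rw [← hconj i]
          ring
  have hcre : c.re = 0 := by simp [hc]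
  have hre : μ.re * S = ∑ i, h i * Complex.normSq (v i) := by
    have h2 := congrArg Complex.re key
    simp only [Complex.add_re, Complex.mul_re, hcre, hTim, Complex.ofReal_re,
      Complex.ofReal_im, mul_zero, zero_mul, sub_zero, zero_sub, neg_zero, zero_add] at h2
    linarith
  have hsum_nonpos : ∑ i, h i * Complex.normSq (v i) ≤ 0 :=
    Finset.sum_nonpos fun i _ =>
      mul_nonpos_of_nonpos_of_nonneg (hh i) (Complex.normSq_nonneg _)
  -- suppose μ.re ≥ 0, derive contradiction
  by_contra hcon
  push_neg at hcon
  have hsum0 : ∑ i, h i * Complex.normSq (v i) = 0 := by nlinarith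
  have hterm : ∀ i ∈ Finset.univ, h i * Complex.normSq (v i) = 0 :=
    (Finset.sum_eq_zero_iff_of_nonpos fun i _ =>
      mul_nonpos_of_nonpos_of_nonneg (hh i) (Complex.normSq_nonneg _)).1 hsum0
  have hvlast : v (Fin.last M) = 0 := by
    have := hterm (Fin.last M) (Finset.mem_univ _)
    have h3 : Complex.normSq (v (Fin.last M)) = 0 := by
      rcases mul_eq_zero.1 this with h4 | h4
      · exact absurd h4 (ne_of_lt hlast)
      · exact h4
    exact Complex.normSq_eq_zero.1 h3
  have hc0 : c ≠ 0 := by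
    simp only [hc, neg_ne_zero]
    exact mul_ne_zero (mul_ne_zero Complex.I_ne_zero (Int.cast_ne_zero.2 hm))
      (Complex.ofReal_ne_zero.2 hk)
  -- downward induction: all coordinates vanish
  have hzero : ∀ n : ℕ, ∀ i : Fin (M + 1), (i : ℕ) + n = M → v i = 0 := by
    intro n
    induction n using Nat.strong_induction_on with
    | _ n IH =>
      intro i hi
      rcases n with _ | n'
      · have hil : i = Fin.last M := Fin.ext (by simpa using hi)
        rw [hil]; exact hvlast
      · have hj : (i : ℕ) + 1 < M + 1 := by omega
        set j : Fin (M + 1) := ⟨(i : ℕ) + 1, hj⟩ with hjdef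
        have hrj := hrow j
        rw [hermite_rowsum] at hrj
        have hvj : v j = 0 := IH n' (by omega) j (by simp [hjdef]; omega)
        have hvj1 : (if hlt : (j : ℕ) + 1 < M + 1 then v ⟨(j : ℕ) + 1, hlt⟩ else 0) = 0 := by
          by_cases hlt : (j : ℕ) + 1 < M + 1
          · rw [dif_pos hlt]
            rcases n' with _ | n''
            · exfalso; simp [hjdef] at hlt; omega
            · exact IH n'' (by omega) _ (by simp [hjdef]; omega)
          · rw [dif_neg hlt]
        have hidx : (⟨(j : ℕ) - 1, by omega⟩ : Fin (M + 1)) = i :=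
          Fin.ext (by simp [hjdef])
        rw [hvj, hvj1, hidx] at hrj
        have hjnat : ((j : ℕ) : ℝ) = ((i : ℕ) : ℝ) + 1 := by
          simp [hjdef]
        rw [hjnat] at hrj
        have hsq : (Real.sqrt (((i : ℕ) : ℝ) + 1) : ℂ) ≠ 0 := by
          rw [Complex.ofReal_ne_zero]
          positivity
        have h5 : c * ((Real.sqrt (((i : ℕ) : ℝ) + 1) : ℂ) * v i) = 0 := by
          rw [mul_zero, mul_zero, add_zero] at hrj
          linear_combination hrj
        rcases mul_eq_zero.1 h5 with h6 | h6
        · exact absurd h6 hc0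
        · rcases mul_eq_zero.1 h6 with h7 | h7
          · exact absurd h7 hsq
          · exact h7
  exact hv0 (funext fun i => hzero (M - (i : ℕ)) i (by omega))
end

section
/- Let A be a real symmetric tridiagonal matrix with nonzero subdiagonal entries and H a negative semidefinite real diagonal matrix whose last diagonal entry is strictly negative. If a vector r satisfies (-i·m·k·A + H)r = iλ_I·r for some real λ_I and nonzero real m·k, then r = 0; i.e., -i·m·k·A + H has no purely imaginary eigenvalues. -/
/-- For a real symmetric tridiagonal `A` with nonzero subdiagonal entries
and a negative semidefinite diagonal `H` with strictly negative last entry, the matrix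
`-i·m·k·A + H` (with `m·k ≠ 0`) has no purely imaginary eigenvalue: any vector `r` with
`(-i·m·k·A + H) r = i·λ_I·r` for real `λ_I` vanishes. -/
theorem no_purely_imaginary_eigenvalue
    (M : ℕ) (A : Matrix (Fin (M + 1)) (Fin (M + 1)) ℝ)
    (hsymm : ∀ i j, A i j = A j i)
    (htri : ∀ i j : Fin (M + 1), (i : ℕ) + 1 < (j : ℕ) → A i j = 0)
    (hsub : ∀ i j : Fin (M + 1), (j : ℕ) = (i : ℕ) + 1 → A i j ≠ 0)
    (h : Fin (M + 1) → ℝ) (hh : ∀ j, h j ≤ 0) (hlast : h (Fin.last M) < 0)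
    (m k : ℝ) (hmk : m * k ≠ 0) (lamI : ℝ) (r : Fin (M + 1) → ℂ)
    (hr : ((-(Complex.I * (m : ℂ) * (k : ℂ))) • A.map Complex.ofReal +
        Matrix.diagonal fun j => ((h j : ℝ) : ℂ)).mulVec r
      = (Complex.I * (lamI : ℂ)) • r) :
    r = 0 := by
  -- Step 1: extract the row equations.
  have hrow : ∀ i, (∑ j, (-(Complex.I * (m:ℂ) * (k:ℂ)) * (A i j : ℂ)) * r j) + (h i : ℂ) * r i
      = Complex.I * (lamI:ℂ) * r i := by
    intro i
    have := congrFun hr i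
    simp [Matrix.mulVec, dotProduct, Matrix.add_apply, Matrix.diagonal_apply,
      Matrix.map_apply, add_mul, Finset.sum_add_distrib, Finset.sum_ite_eq,
      mul_assoc] at this ⊢
    linear_combination this
  -- Step 2: the quadratic form of `A` at `r` is real, so `∑ h i * |r i|² = 0`,
  -- forcing `r (Fin.last M) = 0`.
  have hrM : r (Fin.last M) = 0 := by
    set T : ℂ := ∑ i, ∑ j, (A i j : ℂ) * ((starRingEnd ℂ) (r i) * r j) with hT
    have hTconj : (starRingEnd ℂ) T = T := by
      rw [hT, map_sum]
      rw [Finset.sum_comm]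
      simp only [map_sum, map_mul, Complex.conj_ofReal, Complex.conj_conj]
      refine Finset.sum_congr rfl fun i _ => Finset.sum_congr rfl fun j _ => ?_
      rw [hsymm i j]
      ring
    have hTim : T.im = 0 := by
      have := congrArg Complex.im hTconj
      simp at this
      linarith
    have keysum : ∑ i, (starRingEnd ℂ) (r i) *
        ((∑ j, (-(Complex.I * (m:ℂ) * (k:ℂ)) * (A i j : ℂ)) * r j) + (h i : ℂ) * r i)
        = ∑ i, (starRingEnd ℂ) (r i) * (Complex.I * (lamI:ℂ) * r i) :=
      Finset.sum_congr rfl fun i _ => by rw [hrow i]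
    have hLHS : ∑ i, (starRingEnd ℂ) (r i) *
        ((∑ j, (-(Complex.I * (m:ℂ) * (k:ℂ)) * (A i j : ℂ)) * r j) + (h i : ℂ) * r i)
        = -(Complex.I * (m:ℂ) * (k:ℂ)) * T + ((∑ i, h i * Complex.normSq (r i) : ℝ) : ℂ) := by
      rw [hT, Finset.mul_sum, Complex.ofReal_sum, ← Finset.sum_add_distrib]
      refine Finset.sum_congr rfl fun i _ => ?_
      rw [mul_add, Finset.mul_sum, Finset.mul_sum]
      congr 1
      · exact Finset.sum_congr rfl fun j _ => by ring
      · rw [Complex.ofReal_mul, Complex.normSq_eq_conj_mul_self]; ring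
    have hRHS : ∑ i, (starRingEnd ℂ) (r i) * (Complex.I * (lamI:ℂ) * r i)
        = Complex.I * (lamI:ℂ) * ((∑ i, Complex.normSq (r i) : ℝ) : ℂ) := by
      rw [Complex.ofReal_sum, Finset.mul_sum]
      exact Finset.sum_congr rfl fun i _ => by
        rw [Complex.normSq_eq_conj_mul_self]; ring
    rw [hLHS, hRHS] at keysum
    have hre := congrArg Complex.re keysum
    simp [hTim] at hre
    have hall : ∀ i ∈ Finset.univ, h i * Complex.normSq (r i) = 0 := by
      rw [← Finset.sum_eq_zero_iff_of_nonpos]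
      · exact hre
      · intro i _
        exact mul_nonpos_of_nonpos_of_nonneg (hh i) (Complex.normSq_nonneg _)
    have := hall (Fin.last M) (Finset.mem_univ _)
    have h2 : Complex.normSq (r (Fin.last M)) = 0 := by
      rcases mul_eq_zero.mp this with h' | h'
      · exact absurd h' (ne_of_lt hlast)
      · exact h'
    exact Complex.normSq_eq_zero.mp h2
  -- Step 3: downward induction using the tridiagonal structure.
  have main : ∀ n : ℕ, ∀ l : Fin (M + 1), M - n ≤ (l : ℕ) → r l = 0 := by
    intro n
    induction n with
    | zero =>
      intro l hl
      have : l = Fin.last M := by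
        apply Fin.ext
        have := l.isLt
        simp [Fin.last]
        omega
      rw [this]; exact hrM
    | succ n ih =>
      intro l hl
      by_cases hc : M - n ≤ (l : ℕ)
      · exact ih l hc
      · push_neg at hc
        have hln : (l : ℕ) + 1 = M - n := by omega
        have hi1 : (l : ℕ) + 1 < M + 1 := by omega
        set i : Fin (M + 1) := ⟨(l : ℕ) + 1, hi1⟩ with hidef
        have hri : r i = 0 := ih i (by simp [hidef]; omega)
        have hsum : (∑ j, (-(Complex.I * (m:ℂ) * (k:ℂ)) * (A i j : ℂ)) * r j)
            = (-(Complex.I * (m:ℂ) * (k:ℂ)) * (A i l : ℂ)) * r l := by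
          apply Finset.sum_eq_single
          · intro j _ hj
            by_cases hjl : (j : ℕ) < (l : ℕ)
            · have : A i j = 0 := by
                rw [hsymm]
                apply htri
                simp [hidef]; omega
              simp [this]
            · have hjge : M - n ≤ (j : ℕ) := by
                have : (l:ℕ) ≠ (j:ℕ) := fun hq => hj (Fin.ext hq.symm)
                omega
              rw [ih j hjge]; ring
          · intro hl'; exact absurd (Finset.mem_univ l) hl'
        have heq := hrow i
        rw [hsum, hri] at heq
        have hA : A i l ≠ 0 := by
          rw [hsymm]
          apply hsub
          simp [hidef]
        have hm : m ≠ 0 ∧ k ≠ 0 := mul_ne_zero_iff.mp hmk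
        simp [hm.1, hm.2, hA, Complex.ext_iff] at heq
        exact Complex.ext heq.1 heq.2
  funext l
  exact main M l (by omega)
end

section
/- For any square complex matrix B with Jordan decomposition B = X J X⁻¹, where the maximum Jordan block size is β and the maximum real part of the eigenvalues of B is α, the operator 2-norm of exp(tB) satisfies ‖exp(tB)‖ ≤ β‖X‖‖X⁻¹‖ · max_{0≤i≤β-1} (t^i/i!) e^{αt} for all t ≥ 0. -/
/-- The operator norm of a complex matrix induced by the Euclidean (`ℓ²`) norm. -/
noncomputable def l2OpNorm {n : ℕ} (A : Matrix (Fin n) (Fin n) ℂ) : ℝ :=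
  ‖Matrix.toEuclideanCLM (𝕜 := ℂ) A‖

set_option synthInstance.maxHeartbeats 1000000
set_option maxHeartbeats 1000000

namespace JordanAux

variable {n : ℕ}

lemma l2_nonneg (A : Matrix (Fin n) (Fin n) ℂ) : 0 ≤ l2OpNorm A := norm_nonneg _

lemma l2_mul_le (A B : Matrix (Fin n) (Fin n) ℂ) :
    l2OpNorm (A * B) ≤ l2OpNorm A * l2OpNorm B := by
  unfold l2OpNorm; rw [map_mul]; exact norm_mul_le _ _

lemma l2_smul (c : ℂ) (A : Matrix (Fin n) (Fin n) ℂ) :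
    l2OpNorm (c • A) = ‖c‖ * l2OpNorm A := by
  unfold l2OpNorm
  rw [map_smul]
  exact norm_smul (β := EuclideanSpace ℂ (Fin n) →L[ℂ] EuclideanSpace ℂ (Fin n)) c _

lemma l2_le_bound (A : Matrix (Fin n) (Fin n) ℂ) {C : ℝ} (hC : 0 ≤ C)
    (h : ∀ x : Fin n → ℂ, ∑ i, ‖A.mulVec x i‖ ^ 2 ≤ C ^ 2 * ∑ i, ‖x i‖ ^ 2) :
    l2OpNorm A ≤ C := by
  refine ContinuousLinearMap.opNorm_le_bound _ hC fun x => ?_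
  obtain ⟨v, rfl⟩ : ∃ v, (WithLp.equiv 2 (Fin n → ℂ)).symm v = x :=
    ⟨WithLp.equiv 2 _ x, (WithLp.equiv 2 _).symm_apply_apply x⟩
  rw [WithLp.equiv_symm_apply, Matrix.toEuclideanCLM_toLp, EuclideanSpace.norm_eq, EuclideanSpace.norm_eq]
  simp only [PiLp.toLp_apply]
  calc Real.sqrt (∑ i, ‖A.mulVec v i‖ ^ 2) ≤ Real.sqrt (C ^ 2 * ∑ i, ‖v i‖ ^ 2) :=
        Real.sqrt_le_sqrt (h v)
    _ = C * Real.sqrt (∑ i, ‖v i‖ ^ 2) := by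
        rw [Real.sqrt_mul (sq_nonneg C), Real.sqrt_sq hC]

lemma l2_diagonal_le (v : Fin n → ℂ) {C : ℝ} (hC : 0 ≤ C) (h : ∀ i, ‖v i‖ ≤ C) :
    l2OpNorm (Matrix.diagonal v) ≤ C := by
  refine l2_le_bound _ hC fun x => ?_
  rw [Finset.mul_sum]
  refine Finset.sum_le_sum fun i _ => ?_
  rw [Matrix.mulVec_diagonal, norm_mul, mul_pow]
  exact mul_le_mul_of_nonneg_right (pow_le_pow_left₀ (norm_nonneg _) (h i) 2) (sq_nonneg _)

lemma l2_one_le : l2OpNorm (1 : Matrix (Fin n) (Fin n) ℂ) ≤ 1 := by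
  unfold l2OpNorm
  rw [map_one, ContinuousLinearMap.one_def]
  exact ContinuousLinearMap.norm_id_le

lemma l2_shift_le :
    l2OpNorm (Matrix.of fun i j : Fin n => if (j : ℕ) = (i : ℕ) + 1 then (1 : ℂ) else 0) ≤ 1 := by
  refine l2_le_bound _ zero_le_one fun x => ?_
  rw [one_pow, one_mul]
  have hmv : ∀ i : Fin n,
      (Matrix.of fun i j : Fin n => if (j : ℕ) = (i : ℕ) + 1 then (1 : ℂ) else 0).mulVec x i
        = if h : (i : ℕ) + 1 < n then x ⟨(i : ℕ) + 1, h⟩ else 0 := by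
    intro i
    simp only [Matrix.mulVec, dotProduct, Matrix.of_apply]
    split_ifs with h
    · rw [Finset.sum_eq_single (⟨(i : ℕ) + 1, h⟩ : Fin n)]
      · simp
      · intro j _ hj
        rw [if_neg, zero_mul]
        exact fun hc => hj (Fin.ext hc)
      · simp
    · refine Finset.sum_eq_zero fun j _ => ?_
      rw [if_neg, zero_mul]
      exact fun hc => h (hc ▸ j.isLt)
  cases n with
  | zero => simp
  | succ m =>
    calc ∑ i, ‖(Matrix.of fun i j : Fin (m+1) =>
            if (j : ℕ) = (i : ℕ) + 1 then (1 : ℂ) else 0).mulVec x i‖ ^ 2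
        ≤ ∑ i : Fin (m+1), ‖x (i + 1)‖ ^ 2 := by
          refine Finset.sum_le_sum fun i _ => ?_
          rw [hmv]
          split_ifs with h
          · have : (⟨(i : ℕ) + 1, h⟩ : Fin (m+1)) = i + 1 := by
              refine Fin.ext ?_
              rw [Fin.val_add_one_of_lt]
              exact Fin.lt_def.mpr (by simpa using Nat.lt_of_succ_lt_succ h)
            rw [this]
          · simp [sq_nonneg]
      _ = ∑ j, ‖x j‖ ^ 2 := by
          simpa using Equiv.sum_comp (Equiv.addRight (1 : Fin (m+1))) fun j => ‖x j‖ ^ 2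

end JordanAux

set_option maxHeartbeats 1000000 in
set_option synthInstance.maxHeartbeats 400000 in
/-- If `B = X * J * X⁻¹` with `J` a Jordan normal form whose Jordan blocks
have size at most `β` and whose eigenvalues have real part at most `α`, then
`‖exp(tB)‖ ≤ β ‖X‖ ‖X⁻¹‖ max_{0 ≤ i ≤ β-1} (tⁱ/i!) e^{αt}` for all `t ≥ 0`. -/
theorem opNorm_exp_le_of_jordan_form
    (n : ℕ) (B X Xinv J : Matrix (Fin n) (Fin n) ℂ)
    (hX1 : X * Xinv = 1) (hX2 : Xinv * X = 1)
    (hB : B = X * J * Xinv)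
    (d : Fin n → ℂ) (sup : Fin n → Prop) [DecidablePred sup]
    -- `J` is upper bidiagonal: diagonal `d`, superdiagonal entries `0` or `1`
    (hJ : ∀ i j : Fin n, J i j =
      if i = j then d i
      else if (j : ℕ) = (i : ℕ) + 1 ∧ sup i then 1 else 0)
    -- superdiagonal ones only join equal eigenvalues (within one Jordan block)
    (hchain : ∀ i j : Fin n, (j : ℕ) = (i : ℕ) + 1 → sup i → d i = d j)
    (β : ℕ) (hβ : 0 < β)
    -- every Jordan block has size at most `β`: no `β` consecutive superdiagonal ones
    (hblock : ∀ i : ℕ, ¬ ∀ l : ℕ, l < β → ∃ hil : i + l < n, sup ⟨i + l, hil⟩)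
    (α : ℝ) (hα : ∀ i, (d i).re ≤ α) :
    ∀ t : ℝ, 0 ≤ t →
      l2OpNorm (NormedSpace.exp ((t : ℂ) • B)) ≤
        (β : ℝ) * l2OpNorm X * l2OpNorm Xinv *
          ((Finset.range β).sup' (Finset.nonempty_range_iff.mpr hβ.ne')
            fun i => t ^ i / (Nat.factorial i)) * Real.exp (α * t) := by
  intro t ht
  set D : Matrix (Fin n) (Fin n) ℂ := Matrix.diagonal d with hD
  set N : Matrix (Fin n) (Fin n) ℂ :=
    Matrix.of fun i j => if (j : ℕ) = (i : ℕ) + 1 ∧ sup i then 1 else 0 with hN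
  set S : Matrix (Fin n) (Fin n) ℂ :=
    Matrix.of fun i j => if (j : ℕ) = (i : ℕ) + 1 then (1 : ℂ) else 0 with hS
  set M : ℝ := (Finset.range β).sup' (Finset.nonempty_range_iff.mpr hβ.ne')
    fun i => t ^ i / (Nat.factorial i) with hM
  have hM1 : (1 : ℝ) ≤ M := by
    have := Finset.le_sup' (fun i => t ^ i / (Nat.factorial i))
      (Finset.mem_range.mpr hβ)
    simpa using this.trans_eq hM.symm
  have hM0 : 0 ≤ M := zero_le_one.trans hM1
  -- J = D + N
  have hJDN : J = D + N := by
    ext i j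
    rw [hJ i j]
    by_cases hij : i = j
    · subst hij
      simp [hD, hN, Matrix.diagonal_apply_eq]
    · simp [hD, hN, Matrix.diagonal_apply_ne _ hij, hij]
  -- N = E * S with E diagonal
  have hNES : N = Matrix.diagonal (fun i => if sup i then (1 : ℂ) else 0) * S := by
    ext i j
    rw [Matrix.diagonal_mul]
    simp only [hN, hS, Matrix.of_apply]
    by_cases h1 : (j : ℕ) = (i : ℕ) + 1 <;> by_cases h2 : sup i <;> simp [h1, h2]
  have hNle : l2OpNorm N ≤ 1 := by
    rw [hNES]
    calc l2OpNorm _ ≤ l2OpNorm (Matrix.diagonal fun i => if sup i then (1 : ℂ) else 0) *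
          l2OpNorm S := JordanAux.l2_mul_le _ _
      _ ≤ 1 * 1 := by
          refine mul_le_mul ?_ JordanAux.l2_shift_le (JordanAux.l2_nonneg _) zero_le_one
          refine JordanAux.l2_diagonal_le _ zero_le_one fun i => ?_
          split_ifs <;> simp
      _ = 1 := one_mul 1
  have hNpow : ∀ k : ℕ, l2OpNorm (N ^ k) ≤ 1 := by
    intro k
    induction k with
    | zero => simpa using JordanAux.l2_one_le
    | succ k ih =>
      rw [pow_succ]
      calc l2OpNorm (N ^ k * N) ≤ l2OpNorm (N ^ k) * l2OpNorm N := JordanAux.l2_mul_le _ _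
        _ ≤ 1 * 1 := mul_le_mul ih hNle (JordanAux.l2_nonneg _) zero_le_one
        _ = 1 := one_mul 1
  -- chain structure of powers of N
  have hNk : ∀ k : ℕ, ∀ i j : Fin n, (N ^ k) i j ≠ 0 →
      ((j : ℕ) = (i : ℕ) + k ∧ ∀ l : ℕ, l < k → ∃ h : (i : ℕ) + l < n, sup ⟨(i : ℕ) + l, h⟩) := by
    intro k
    induction k with
    | zero =>
      intro i j h
      rw [pow_zero, Matrix.one_apply] at h
      have hij : i = j := by
        by_contra hij
        simp [hij] at h
      exact ⟨by simp [hij], fun l hl => absurd hl (Nat.not_lt_zero l)⟩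
    | succ k ih =>
      intro i j h
      rw [pow_succ', Matrix.mul_apply] at h
      obtain ⟨m, -, hm⟩ := Finset.exists_ne_zero_of_sum_ne_zero h
      have hNim : N i m ≠ 0 := left_ne_zero_of_mul hm
      have hNmj : (N ^ k) m j ≠ 0 := right_ne_zero_of_mul hm
      have him : (m : ℕ) = (i : ℕ) + 1 ∧ sup i := by
        by_contra hc
        exact hNim (by simp [hN, hc])
      obtain ⟨hj, hch⟩ := ih m j hNmj
      constructor
      · omega
      · intro l hl
        match l with
        | 0 =>
          refine ⟨by simpa using i.isLt, ?_⟩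
          have : (⟨(i : ℕ) + 0, by simpa using i.isLt⟩ : Fin n) = i := Fin.ext (by simp)
          rw [this]; exact him.2
        | l + 1 =>
          obtain ⟨hml, hsl⟩ := hch l (by omega)
          have hml' : (i : ℕ) + (l + 1) < n := by omega
          refine ⟨hml', ?_⟩
          have : (⟨(i : ℕ) + (l + 1), hml'⟩ : Fin n) = ⟨(m : ℕ) + l, hml⟩ :=
            Fin.ext (by simp; omega)
          rw [this]; exact hsl
  have hNβ : N ^ β = 0 := by
    ext i j
    rw [Matrix.zero_apply]
    by_contra h
    exact hblock (i : ℕ) (hNk β i j h).2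
  -- commuting
  have hcomm : Commute ((t : ℂ) • D) ((t : ℂ) • N) := by
    refine (Commute.smul_left ?_ _).smul_right _
    show D * N = N * D
    ext i j
    rw [hD, Matrix.diagonal_mul, Matrix.mul_diagonal]
    by_cases hc : (j : ℕ) = (i : ℕ) + 1 ∧ sup i
    · rw [hchain i j hc.1 hc.2, mul_comm]
    · simp [hN, hc]
  -- exponentials
  have hexpD : NormedSpace.exp ((t : ℂ) • D) =
      Matrix.diagonal fun i => Complex.exp ((t : ℂ) * d i) := by
    have h1 : (t : ℂ) • D = Matrix.diagonal ((t : ℂ) • d) := by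
      rw [hD, Matrix.diagonal_smul]
    have h2 : NormedSpace.exp ((t : ℂ) • d) = fun i => Complex.exp ((t : ℂ) * d i) := by
      funext i
      rw [Pi.coe_exp, Pi.smul_apply, smul_eq_mul, ← Complex.exp_eq_exp_ℂ]
    rw [h1, Matrix.exp_diagonal, h2]
  have hexpN : NormedSpace.exp ((t : ℂ) • N) =
      ∑ k ∈ Finset.range β, (k.factorial⁻¹ : ℂ) • ((t : ℂ) • N) ^ k := by
    rw [NormedSpace.exp_eq_tsum ℂ]
    show ∑' k : ℕ, (k.factorial⁻¹ : ℂ) • ((t : ℂ) • N) ^ k = _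
    refine tsum_eq_sum fun k hk => ?_
    have hkβ : β ≤ k := by simpa using hk
    have hN0 : N ^ k = 0 := by
      rw [← Nat.add_sub_cancel' hkβ, pow_add, hNβ, zero_mul]
    rw [smul_pow, hN0]
    simp
  have hexpDle : l2OpNorm (NormedSpace.exp ((t : ℂ) • D)) ≤ Real.exp (α * t) := by
    rw [hexpD]
    refine JordanAux.l2_diagonal_le _ (Real.exp_pos _).le fun i => ?_
    rw [Complex.norm_exp]
    refine Real.exp_le_exp.mpr ?_
    have : ((t : ℂ) * d i).re = t * (d i).re := by simp [Complex.mul_re]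
    rw [this, mul_comm α t]
    exact mul_le_mul_of_nonneg_left (hα i) ht
  have hexpNle : l2OpNorm (NormedSpace.exp ((t : ℂ) • N)) ≤ (β : ℝ) * M := by
    rw [hexpN]
    unfold l2OpNorm
    simp only [smul_pow]
    rw [map_sum]
    calc ‖∑ k ∈ Finset.range β, Matrix.toEuclideanCLM (𝕜 := ℂ)
            ((k.factorial⁻¹ : ℂ) • ((t : ℂ) ^ k • N ^ k))‖
        ≤ ∑ k ∈ Finset.range β, ‖Matrix.toEuclideanCLM (𝕜 := ℂ)
            ((k.factorial⁻¹ : ℂ) • ((t : ℂ) ^ k • N ^ k))‖ := norm_sum_le _ _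
      _ ≤ ∑ _k ∈ Finset.range β, M := by
          refine Finset.sum_le_sum fun k hk => ?_
          show l2OpNorm ((k.factorial⁻¹ : ℂ) • ((t : ℂ) ^ k • N ^ k)) ≤ M
          rw [JordanAux.l2_smul, JordanAux.l2_smul]
          have h1 : ‖(k.factorial⁻¹ : ℂ)‖ = ((k.factorial : ℝ))⁻¹ := by
            rw [norm_inv]
            norm_num
          have h2 : ‖(t : ℂ) ^ k‖ = t ^ k := by
            rw [norm_pow, Complex.norm_real, Real.norm_of_nonneg ht]
          rw [h1, h2]
          have h3 : ((k.factorial : ℝ))⁻¹ * (t ^ k * l2OpNorm (N ^ k))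
              ≤ ((k.factorial : ℝ))⁻¹ * (t ^ k * 1) := by
            refine mul_le_mul_of_nonneg_left ?_ (by positivity)
            exact mul_le_mul_of_nonneg_left (hNpow k) (by positivity)
          refine h3.trans ?_
          rw [mul_one, ← div_eq_inv_mul]
          exact Finset.le_sup' (fun i => t ^ i / (Nat.factorial i)) hk
      _ = (β : ℝ) * M := by
          rw [Finset.sum_const, Finset.card_range, nsmul_eq_mul]
  -- conjugation
  set u : (Matrix (Fin n) (Fin n) ℂ)ˣ := ⟨X, Xinv, hX1, hX2⟩ with hu
  have htB : (t : ℂ) • B = (u : Matrix (Fin n) (Fin n) ℂ) * ((t : ℂ) • J) *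
      ((u⁻¹ : (Matrix (Fin n) (Fin n) ℂ)ˣ) : Matrix (Fin n) (Fin n) ℂ) := by
    rw [hB]
    show _ = X * ((t : ℂ) • J) * Xinv
    rw [mul_smul_comm, smul_mul_assoc]
  have hconj : NormedSpace.exp ((t : ℂ) • B) =
      X * NormedSpace.exp ((t : ℂ) • J) * Xinv := by
    rw [htB, Matrix.exp_units_conj]
    rfl
  have hexpJ : NormedSpace.exp ((t : ℂ) • J) =
      NormedSpace.exp ((t : ℂ) • D) * NormedSpace.exp ((t : ℂ) • N) := by
    rw [hJDN, smul_add, Matrix.exp_add_of_commute _ _ hcomm]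
  have hexpJle : l2OpNorm (NormedSpace.exp ((t : ℂ) • J)) ≤
      Real.exp (α * t) * ((β : ℝ) * M) := by
    rw [hexpJ]
    exact (JordanAux.l2_mul_le _ _).trans
      (mul_le_mul hexpDle hexpNle (JordanAux.l2_nonneg _) (Real.exp_pos _).le)
  calc l2OpNorm (NormedSpace.exp ((t : ℂ) • B))
      = l2OpNorm (X * NormedSpace.exp ((t : ℂ) • J) * Xinv) := by rw [hconj]
    _ ≤ l2OpNorm (X * NormedSpace.exp ((t : ℂ) • J)) * l2OpNorm Xinv :=
        JordanAux.l2_mul_le _ _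
    _ ≤ (l2OpNorm X * l2OpNorm (NormedSpace.exp ((t : ℂ) • J))) * l2OpNorm Xinv :=
        mul_le_mul_of_nonneg_right (JordanAux.l2_mul_le _ _) (JordanAux.l2_nonneg _)
    _ ≤ (l2OpNorm X * (Real.exp (α * t) * ((β : ℝ) * M))) * l2OpNorm Xinv :=
        mul_le_mul_of_nonneg_right
          (mul_le_mul_of_nonneg_left hexpJle (JordanAux.l2_nonneg _))
          (JordanAux.l2_nonneg _)
    _ = (β : ℝ) * l2OpNorm X * l2OpNorm Xinv * M * Real.exp (α * t) := by ring
end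

section
/- For every integer m ≥ 1: binom(2m, m)/2 = Σ_{l=0}^{m-1} (1/(l+1)) · binom(2l, l) · binom(2(m-l-1), m-l-1). Equivalently, the central binomial coefficients satisfy the Catalan-type convolution binom(2m-1, m-1) = Σ_{l=0}^{m-1} C_l · binom(2(m-1-l), m-1-l), where C_l is the l-th Catalan number. -/
open Finset

private def b (n : ℕ) : ℚ := (Nat.choose (2 * n) n : ℚ)
private def c (n : ℕ) : ℚ := (catalan n : ℚ)

private lemma c_eq (n : ℕ) : ((n : ℚ) + 1) * c n = b n := by
  have := succ_mul_catalan_eq_centralBinom n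
  have : ((n + 1) * catalan n : ℚ) = (Nat.centralBinom n : ℚ) := by exact_mod_cast congrArg (Nat.cast : ℕ → ℚ) this
  simpa [b, c, Nat.centralBinom] using this

private lemma b_succ (n : ℕ) : b (n + 1) = 4 * b n - 2 * c n := by
  have h := Nat.succ_mul_centralBinom_succ n
  have hq : ((n : ℚ) + 1) * b (n + 1) = 2 * (2 * n + 1) * b n := by
    have := congrArg (Nat.cast : ℕ → ℚ) h
    push_cast [Nat.centralBinom, b] at this ⊢
    linarith [this]
  have hc := c_eq n
  have hn : ((n : ℚ) + 1) ≠ 0 := by positivity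
  have : ((n : ℚ) + 1) * b (n + 1) = ((n : ℚ) + 1) * (4 * b n - 2 * c n) := by
    rw [hq]; ring_nf; nlinarith [hc]
  exact mul_left_cancel₀ hn this

private lemma key (n : ℕ) : ∑ l ∈ range (n + 1), c l * b (n - l) = b (n + 1) / 2 := by
  induction n with
  | zero => simp [b, c, catalan]
  | succ n ih =>
    rw [Finset.sum_range_succ]
    have h1 : ∀ l ∈ range (n + 1), c l * b (n + 1 - l) = c l * (4 * b (n - l) - 2 * c (n - l)) := by
      intro l hl
      have hl' : l ≤ n := Nat.lt_succ_iff.mp (mem_range.mp hl)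
      rw [show n + 1 - l = (n - l) + 1 by omega, b_succ]
    rw [Finset.sum_congr rfl h1]
    have hcat : (catalan (n + 1) : ℚ) = ∑ l ∈ range (n + 1), c l * c (n - l) := by
      rw [catalan_succ, Fin.sum_univ_eq_sum_range (fun i => catalan i * catalan (n - i))]
      push_cast [c]; rfl
    have hsplit : ∑ l ∈ range (n + 1), c l * (4 * b (n - l) - 2 * c (n - l))
        = 4 * (∑ l ∈ range (n + 1), c l * b (n - l)) - 2 * (∑ l ∈ range (n + 1), c l * c (n - l)) := by
      rw [Finset.mul_sum, Finset.mul_sum, ← Finset.sum_sub_distrib]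
      exact Finset.sum_congr rfl fun l _ => by ring
    rw [hsplit, ih, ← hcat]
    have h2 := b_succ (n + 1)
    have : b 0 = 1 := by simp [b]
    rw [Nat.sub_self, this]
    simp only [c] at h2 ⊢
    linarith

/-- For `m ≥ 1`,
`binom(2m, m)/2 = Σ_{l=0}^{m-1} (1/(l+1)) binom(2l, l) binom(2(m-l-1), m-l-1)`;
equivalently, `binom(2m-1, m-1) = Σ_{l=0}^{m-1} C_l binom(2(m-1-l), m-1-l)` where
`C_l` is the `l`-th Catalan number. -/
theorem central_binom_catalan_convolution (m : ℕ) (hm : 1 ≤ m) :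
    (((Nat.choose (2 * m) m : ℚ)) / 2 =
      ∑ l ∈ range m, (1 / ((l : ℚ) + 1)) * (Nat.choose (2 * l) l : ℚ) *
        (Nat.choose (2 * (m - l - 1)) (m - l - 1) : ℚ)) ∧
    Nat.choose (2 * m - 1) (m - 1) =
      ∑ l ∈ range m, catalan l * Nat.choose (2 * (m - 1 - l)) (m - 1 - l) := by
  obtain ⟨n, rfl⟩ : ∃ n, m = n + 1 := ⟨m - 1, by omega⟩
  have hterm : ∀ l ∈ range (n + 1),
      (1 / ((l : ℚ) + 1)) * (Nat.choose (2 * l) l : ℚ) *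
        (Nat.choose (2 * (n + 1 - l - 1)) (n + 1 - l - 1) : ℚ) = c l * b (n - l) := by
    intro l hl
    have hl' : l ≤ n := Nat.lt_succ_iff.mp (mem_range.mp hl)
    have hc := c_eq l
    have hln : ((l : ℚ) + 1) ≠ 0 := by positivity
    rw [show n + 1 - l - 1 = n - l by omega]
    have : (1 / ((l : ℚ) + 1)) * (Nat.choose (2 * l) l : ℚ) = c l := by
      field_simp [b] at hc ⊢; linarith [show b l = (Nat.choose (2 * l) l : ℚ) from rfl]
    rw [this]; rfl
  have h1 : ((Nat.choose (2 * (n + 1)) (n + 1) : ℚ)) / 2 =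
      ∑ l ∈ range (n + 1), (1 / ((l : ℚ) + 1)) * (Nat.choose (2 * l) l : ℚ) *
        (Nat.choose (2 * (n + 1 - l - 1)) (n + 1 - l - 1) : ℚ) := by
    rw [Finset.sum_congr rfl hterm, key]; rfl
  refine ⟨h1, ?_⟩
  have hdouble : 2 * Nat.choose (2 * n + 1) n = Nat.choose (2 * n + 2) (n + 1) := by
    rw [show 2 * n + 2 = (2 * n + 1) + 1 from rfl, Nat.choose_succ_succ (2 * n + 1) n,
      Nat.choose_symm_half]
    omega
  have hL : (Nat.choose (2 * (n + 1) - 1) (n + 1 - 1) : ℚ) = b (n + 1) / 2 := by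
    have h := congrArg (Nat.cast : ℕ → ℚ) hdouble
    push_cast at h
    rw [show 2 * (n + 1) - 1 = 2 * n + 1 by omega, show n + 1 - 1 = n from rfl]
    simp only [b, show 2 * (n + 1) = 2 * n + 2 by ring]
    linarith
  have hq : (Nat.choose (2 * (n + 1) - 1) (n + 1 - 1) : ℚ) =
      ((∑ l ∈ range (n + 1), catalan l * Nat.choose (2 * (n + 1 - 1 - l)) (n + 1 - 1 - l) : ℕ) : ℚ) := by
    rw [Nat.cast_sum, hL, ← key n]
    apply Finset.sum_congr rfl
    intro l hl
    push_cast
    rfl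
  exact_mod_cast hq
end

section
/- If m_1 ≥ 2m_2 are nonnegative integers, then binom(m_1+1, m_2) = Σ_{l=0}^{m_2} (1/(l+1)) binom(2l, l) binom(m_1 - 2l, m_2 - l) (Jonah's theorem). -/
open Finset

lemma cat_cast (l : ℕ) : (1 / ((l : ℚ) + 1)) * (Nat.choose (2 * l) l : ℚ) = (catalan l : ℚ) := by
  have h : ((l + 1) * catalan l : ℕ) = (2 * l).choose l :=
    succ_mul_catalan_eq_centralBinom l
  have h' : ((l : ℚ) + 1) * (catalan l : ℚ) = ((2 * l).choose l : ℚ) := by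
    exact_mod_cast congrArg (Nat.cast : ℕ → ℚ) h
  have hne : ((l : ℚ) + 1) ≠ 0 := by positivity
  field_simp
  linarith [h']

lemma cat_bin (k : ℕ) : (catalan (k+1) : ℚ) + ((2*k+2).choose k : ℚ) = ((2*k+2).choose (k+1) : ℚ) := by
  have h1 : (k + 2) * catalan (k+1) = (2*k+2).choose (k+1) := by
    have := succ_mul_catalan_eq_centralBinom (k+1)
    rwa [Nat.centralBinom, show 2*(k+1) = 2*k+2 from by ring] at this
  have h2 : (2*k+2).choose (k+1) * (k+1) = (2*k+2).choose k * (k+2) := by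
    have := Nat.choose_succ_right_eq (2*k+2) k
    rwa [show 2*k+2 - k = k+2 by omega] at this
  have h1' : ((k : ℚ) + 2) * (catalan (k+1) : ℚ) = ((2*k+2).choose (k+1) : ℚ) := by
    exact_mod_cast congrArg (Nat.cast : ℕ → ℚ) h1
  have h2' : ((2*k+2).choose (k+1) : ℚ) * ((k:ℚ)+1) = ((2*k+2).choose k : ℚ) * ((k:ℚ)+2) := by
    exact_mod_cast congrArg (Nat.cast : ℕ → ℚ) h2
  have hne : ((k : ℚ) + 2) ≠ 0 := by positivity
  apply mul_left_cancel₀ hne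
  linear_combination h1' - h2'

lemma jonah_aux (k : ℕ) : ∀ j : ℕ,
    ∑ l ∈ range (k+1), (catalan l : ℚ) * ((2*(k-l)+j).choose (k-l) : ℚ)
      = ((2*k+j+1).choose k : ℚ) := by
  induction k with
  | zero => intro j; simp
  | succ k ih =>
    intro j
    induction j with
    | zero =>
      rw [Finset.sum_range_succ]
      have key : ∀ l ∈ range (k+1),
          (catalan l : ℚ) * ((2*(k+1-l)+0).choose (k+1-l) : ℚ)
            = 2 * ((catalan l : ℚ) * ((2*(k-l)+1).choose (k-l) : ℚ)) := by
        intro l hl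
        rw [Finset.mem_range] at hl
        have hd : k + 1 - l = (k - l) + 1 := by omega
        have harg : 2*((k-l)+1)+0 = (2*(k-l)+1) + 1 := by omega
        rw [hd, harg, Nat.choose_succ_succ]
        have hsymm : (2*(k-l)+1).choose (k-l+1) = (2*(k-l)+1).choose (k-l) := by
          rw [show (k-l)+1 = (2*(k-l)+1) - (k-l) by omega]
          exact Nat.choose_symm (by omega)
        rw [hsymm]
        push_cast
        ring
      rw [Finset.sum_congr rfl key, ← Finset.mul_sum, ih 1]
      simp only [Nat.sub_self, Nat.choose_zero_right, Nat.cast_one, mul_one, mul_zero]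
      have hpas : ((2*(k+1)+0+1).choose (k+1) : ℚ)
          = ((2*k+2).choose k : ℚ) + ((2*k+2).choose (k+1) : ℚ) := by
        have : (2*(k+1)+0+1).choose (k+1) = (2*k+2).choose k + (2*k+2).choose (k+1) := by
          rw [show 2*(k+1)+0+1 = (2*k+2)+1 by omega, Nat.choose_succ_succ]
        exact_mod_cast congrArg (Nat.cast : ℕ → ℚ) this
      rw [hpas, ← cat_bin k]
      rw [show 2*k+1+1 = 2*k+2 by omega]
      ring
    | succ j ihj =>
      rw [Finset.sum_range_succ]
      have key : ∀ l ∈ range (k+1),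
          (catalan l : ℚ) * ((2*(k+1-l)+(j+1)).choose (k+1-l) : ℚ)
            = (catalan l : ℚ) * ((2*(k+1-l)+j).choose (k+1-l) : ℚ)
              + (catalan l : ℚ) * ((2*(k-l)+(j+2)).choose (k-l) : ℚ) := by
        intro l hl
        rw [Finset.mem_range] at hl
        have hd : k + 1 - l = (k - l) + 1 := by omega
        have harg : 2*((k-l)+1)+(j+1) = (2*(k-l)+(j+2)) + 1 := by omega
        have harg2 : 2*((k-l)+1)+j = 2*(k-l)+(j+2) := by omega
        rw [hd, harg, Nat.choose_succ_succ, harg2]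
        simp only [Nat.succ_eq_add_one]
        push_cast
        ring
      rw [Finset.sum_congr rfl key, Finset.sum_add_distrib, ih (j+2)]
      rw [Finset.sum_range_succ] at ihj
      simp only [Nat.sub_self, Nat.choose_zero_right, Nat.cast_one, mul_one,
        Nat.mul_zero, Nat.zero_add] at ihj ⊢
      have hpas : ((2*(k+1)+(j+1)+1).choose (k+1) : ℚ)
          = ((2*k+(j+2)+1).choose k : ℚ) + ((2*(k+1)+j+1).choose (k+1) : ℚ) := by
        have : (2*(k+1)+(j+1)+1).choose (k+1)
            = (2*k+(j+2)+1).choose k + (2*(k+1)+j+1).choose (k+1) := by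
          rw [show 2*(k+1)+(j+1)+1 = (2*k+(j+2)+1)+1 by omega, Nat.choose_succ_succ]
          congr 2
          omega
        exact_mod_cast congrArg (Nat.cast : ℕ → ℚ) this
      rw [hpas, ← ihj]
      ring

/-- Jonah's theorem: if `m₁ ≥ 2 m₂`, then
`binom(m₁+1, m₂) = Σ_{l=0}^{m₂} (1/(l+1)) binom(2l, l) binom(m₁-2l, m₂-l)`. -/
theorem jonah_theorem (m₁ m₂ : ℕ) (h : 2 * m₂ ≤ m₁) :
    (Nat.choose (m₁ + 1) m₂ : ℚ) =
      ∑ l ∈ range (m₂ + 1), (1 / ((l : ℚ) + 1)) * (Nat.choose (2 * l) l : ℚ) *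
        (Nat.choose (m₁ - 2 * l) (m₂ - l) : ℚ) := by
  have key : ∀ l ∈ range (m₂+1),
      (1 / ((l : ℚ) + 1)) * (Nat.choose (2 * l) l : ℚ) * (Nat.choose (m₁ - 2 * l) (m₂ - l) : ℚ)
        = (catalan l : ℚ) * ((2*(m₂-l)+(m₁-2*m₂)).choose (m₂-l) : ℚ) := by
    intro l hl
    rw [Finset.mem_range] at hl
    rw [cat_cast, show m₁ - 2*l = 2*(m₂-l)+(m₁-2*m₂) by omega]
  rw [Finset.sum_congr rfl key, jonah_aux m₂ (m₁ - 2*m₂)]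
  rw [show 2*m₂+(m₁-2*m₂)+1 = m₁+1 by omega]
end

section
/- Define K⁽¹⁾ = a > 0 and recursively K⁽ᵐ⁾ = c·Σ_{l=1}^{m-1} (1/l) K⁽ˡ⁾ K⁽ᵐ⁻ˡ⁾ for m ≥ 2, with c > 0. Then K⁽ᵐ⁺¹⁾ = 2⁻ᵐ binom(2m, m) · a · (c·a)ᵐ for all m ≥ 0, and consequently K⁽ᵐ⁺¹⁾ ≤ a(2ca)ᵐ. -/
open Finset

private def cB (n : ℕ) : ℝ := (Nat.centralBinom n : ℝ)

private lemma cB_rec (n : ℕ) : ((n : ℝ) + 1) * cB (n + 1) = (4 * n + 2) * cB n := by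
  have h := congrArg (Nat.cast : ℕ → ℝ) (Nat.succ_mul_centralBinom_succ n)
  push_cast at h
  unfold cB
  linarith

private lemma cB_pos (n : ℕ) : 0 < cB n := by
  unfold cB; exact_mod_cast Nat.centralBinom_pos n

private lemma weight_sym (m : ℕ) :
    2 * ∑ j ∈ range (m + 1), (j : ℝ) * cB j * cB (m - j)
      = (m : ℝ) * ∑ j ∈ range (m + 1), cB j * cB (m - j) := by
  have h1 : ∑ j ∈ range (m + 1), (j : ℝ) * cB j * cB (m - j)
      = ∑ j ∈ range (m + 1), ((m - j : ℕ) : ℝ) * cB (m - j) * cB j := by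
    rw [← Finset.sum_range_reflect]
    apply Finset.sum_congr rfl
    intro j hj
    simp only [Finset.mem_range] at hj
    have e1 : m + 1 - 1 - j = m - j := by omega
    have e2 : m - (m - j) = j := by omega
    rw [e1, e2]
  rw [two_mul, Finset.mul_sum]
  nth_rewrite 2 [h1]
  rw [← Finset.sum_add_distrib]
  apply Finset.sum_congr rfl
  intro j hj
  simp only [Finset.mem_range] at hj
  have hcast : ((m - j : ℕ) : ℝ) = (m : ℝ) - j := by
    have hjm : j ≤ m := by omega
    push_cast [hjm]; ring
  rw [hcast]; ring

private lemma conv_cB (n : ℕ) :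
    ∑ j ∈ range (n + 1), cB j * cB (n - j) = 4 ^ n := by
  induction n with
  | zero => simp [cB, Nat.centralBinom]
  | succ n ih =>
    have hW : ∑ j ∈ range (n + 2), (j : ℝ) * cB j * cB (n + 1 - j)
        = 4 * ∑ j ∈ range (n + 1), (j : ℝ) * cB j * cB (n - j)
          + 2 * ∑ j ∈ range (n + 1), cB j * cB (n - j) := by
      rw [Finset.sum_range_succ' (fun j => (j : ℝ) * cB j * cB (n + 1 - j)) (n + 1)]
      simp only [Nat.cast_zero, zero_mul, add_zero]
      have hterm : ∀ i ∈ range (n + 1),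
          ((i : ℕ) + 1 : ℕ) * cB (i + 1) * cB (n + 1 - (i + 1))
            = 4 * ((i : ℝ) * cB i * cB (n - i)) + 2 * (cB i * cB (n - i)) := by
        intro i hi
        have e : n + 1 - (i + 1) = n - i := by omega
        rw [e]
        have h := cB_rec i
        push_cast
        nlinarith [h, cB_pos (n - i)]
      rw [Finset.sum_congr rfl hterm, Finset.sum_add_distrib, ← Finset.mul_sum, ← Finset.mul_sum]
    have hs1 := weight_sym (n + 1)
    have hs0 := weight_sym n
    have hne : ((n : ℝ) + 1) ≠ 0 := by positivity
    have key : ((n : ℝ) + 1) * ∑ j ∈ range (n + 2), cB j * cB (n + 1 - j)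
        = ((n : ℝ) + 1) * 4 ^ (n + 1) := by
      push_cast at hs1
      rw [← hs1, hW]
      rw [ih] at hs0 ⊢
      have hp : (4 : ℝ) ^ (n + 1) = 4 * 4 ^ n := by ring
      linear_combination 4 * hs0 - ((n : ℝ) + 1) * hp
    exact mul_left_cancel₀ hne key

private lemma catR (j : ℕ) : (catalan j : ℝ) = 2 * cB j - cB (j + 1) / 2 := by
  have h1 : ((j : ℝ) + 1) * (catalan j : ℝ) = cB j := by
    have := congrArg (Nat.cast : ℕ → ℝ) (succ_mul_catalan_eq_centralBinom j)
    push_cast at this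
    unfold cB; linarith
  have h2 := cB_rec j
  have hne : ((j : ℝ) + 1) ≠ 0 := by positivity
  have key : ((j : ℝ) + 1) * (catalan j : ℝ) = ((j : ℝ) + 1) * (2 * cB j - cB (j + 1) / 2) := by
    nlinarith [h1, h2]
  exact mul_left_cancel₀ hne key

private lemma conv_cat (n : ℕ) :
    ∑ j ∈ range (n + 1), (catalan j : ℝ) * cB (n - j) = cB (n + 1) / 2 := by
  have h1 : ∑ j ∈ range (n + 1), (catalan j : ℝ) * cB (n - j)
      = 2 * (∑ j ∈ range (n + 1), cB j * cB (n - j))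
        - (1 / 2) * ∑ j ∈ range (n + 1), cB (j + 1) * cB (n - j) := by
    rw [Finset.mul_sum, Finset.mul_sum, ← Finset.sum_sub_distrib]
    apply Finset.sum_congr rfl
    intro j hj
    rw [catR]; ring
  have h2 : ∑ j ∈ range (n + 1), cB (j + 1) * cB (n - j)
      = 4 ^ (n + 1) - cB (n + 1) := by
    have h3 := conv_cB (n + 1)
    rw [Finset.sum_range_succ' (fun j => cB j * cB (n + 1 - j)) (n + 1)] at h3
    have e0 : n + 1 - 0 = n + 1 := rfl
    have hcB0 : cB 0 = 1 := by simp [cB, Nat.centralBinom]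
    rw [e0, hcB0, one_mul] at h3
    have hcong : ∀ i ∈ range (n + 1),
        cB (i + 1) * cB (n + 1 - (i + 1)) = cB (i + 1) * cB (n - i) := by
      intro i hi
      congr 2
      omega
    rw [Finset.sum_congr rfl hcong] at h3
    linarith
  rw [h1, conv_cB, h2]
  ring

/-- If `K 1 = a > 0` and `K m = c Σ_{l=1}^{m-1} (1/l) K l K (m-l)` for
`m ≥ 2` with `c > 0`, then `K (m+1) = 2⁻ᵐ binom(2m, m) a (c a)ᵐ` and consequently
`K (m+1) ≤ a (2 c a)ᵐ` for all `m ≥ 0`. -/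
theorem recursion_closed_form_and_bound
    (a c : ℝ) (ha : 0 < a) (hc : 0 < c) (K : ℕ → ℝ)
    (hK1 : K 1 = a)
    (hKrec : ∀ m : ℕ, 2 ≤ m →
      K m = c * ∑ l ∈ Ico 1 m, (1 / (l : ℝ)) * K l * K (m - l)) :
    ∀ m : ℕ,
      K (m + 1) = (2 : ℝ)⁻¹ ^ m * (Nat.choose (2 * m) m : ℝ) * a * (c * a) ^ m ∧
      K (m + 1) ≤ a * (2 * c * a) ^ m := by
  have closed : ∀ m : ℕ, K (m + 1) = (2 : ℝ)⁻¹ ^ m * cB m * a * (c * a) ^ m := by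
    intro m
    induction m using Nat.strong_induction_on with
    | _ m ih =>
      match m with
      | 0 => simpa [cB, Nat.centralBinom] using hK1
      | Nat.succ n =>
        rw [hKrec (n + 2) (by omega)]
        have hterm : ∀ l ∈ Ico 1 (n + 2),
            (1 / (l : ℝ)) * K l * K (n + 2 - l)
              = (catalan (l - 1) : ℝ) * cB (n + 1 - l)
                * ((2 : ℝ)⁻¹ ^ n * a ^ 2 * (c * a) ^ n) := by
          intro l hl
          simp only [Finset.mem_Ico] at hl
          obtain ⟨hl1, hl2⟩ := hl
          have hKl : K l = (2 : ℝ)⁻¹ ^ (l - 1) * cB (l - 1) * a * (c * a) ^ (l - 1) := by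
            have := ih (l - 1) (by omega)
            have e : l - 1 + 1 = l := by omega
            rwa [e] at this
          have hKr : K (n + 2 - l)
              = (2 : ℝ)⁻¹ ^ (n + 1 - l) * cB (n + 1 - l) * a * (c * a) ^ (n + 1 - l) := by
            have := ih (n + 1 - l) (by omega)
            have e : n + 1 - l + 1 = n + 2 - l := by omega
            rwa [e] at this
          have hcat : (1 / (l : ℝ)) * cB (l - 1) = (catalan (l - 1) : ℝ) := by
            have h := congrArg (Nat.cast : ℕ → ℝ)
              (succ_mul_catalan_eq_centralBinom (l - 1))
            push_cast at h
            have e : ((l - 1 : ℕ) : ℝ) + 1 = (l : ℝ) := by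
              have : (1 : ℕ) ≤ l := hl1
              push_cast [this]; ring
            rw [e] at h
            have hlne : (l : ℝ) ≠ 0 := by
              have : (0 : ℕ) < l := hl1
              positivity
            unfold cB
            field_simp
            linarith
          have hpow1 : (2 : ℝ)⁻¹ ^ (l - 1) * (2 : ℝ)⁻¹ ^ (n + 1 - l) = (2 : ℝ)⁻¹ ^ n := by
            rw [← pow_add]
            congr 1
            omega
          have hpow2 : (c * a) ^ (l - 1) * (c * a) ^ (n + 1 - l) = (c * a) ^ n := by
            rw [← pow_add]
            congr 1
            omega
          rw [hKl, hKr, ← hcat]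
          calc (1 / (l : ℝ)) * ((2 : ℝ)⁻¹ ^ (l - 1) * cB (l - 1) * a * (c * a) ^ (l - 1))
                * ((2 : ℝ)⁻¹ ^ (n + 1 - l) * cB (n + 1 - l) * a * (c * a) ^ (n + 1 - l))
              = ((1 / (l : ℝ)) * cB (l - 1)) * cB (n + 1 - l)
                * (((2 : ℝ)⁻¹ ^ (l - 1) * (2 : ℝ)⁻¹ ^ (n + 1 - l)) * a ^ 2
                  * ((c * a) ^ (l - 1) * (c * a) ^ (n + 1 - l))) := by ring
            _ = _ := by rw [hpow1, hpow2]
        rw [Finset.sum_congr rfl hterm, ← Finset.sum_mul]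
        have hreindex : ∑ l ∈ Ico 1 (n + 2), (catalan (l - 1) : ℝ) * cB (n + 1 - l)
            = ∑ j ∈ range (n + 1), (catalan j : ℝ) * cB (n - j) := by
          rw [Finset.sum_Ico_eq_sum_range]
          apply Finset.sum_congr (by norm_num)
          intro j hj
          have e1 : 1 + j - 1 = j := by omega
          have e2 : n + 1 - (1 + j) = n - j := by omega
          rw [e1, e2]
        rw [hreindex, conv_cat]
        have : (2 : ℝ)⁻¹ ^ (n + 1) = (2 : ℝ)⁻¹ ^ n * 2⁻¹ := by ring
        rw [this]
        simp only [Nat.succ_eq_add_one]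
        ring
  intro m
  have hchoose : (Nat.choose (2 * m) m : ℝ) = cB m := by
    unfold cB
    rw [Nat.centralBinom_eq_two_mul_choose]
  constructor
  · rw [closed m, hchoose]
  · rw [closed m]
    have h4 : cB m ≤ 4 ^ m := by
      unfold cB
      have h1 : Nat.centralBinom m ≤ 4 ^ m := by
        have h2 : Nat.centralBinom m ≤ ∑ i ∈ range (2 * m + 1), (2 * m).choose i := by
          rw [Nat.centralBinom_eq_two_mul_choose]
          exact Finset.single_le_sum (f := fun i => (2 * m).choose i)
            (fun i _ => Nat.zero_le _) (by simp; omega)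
        rw [Nat.sum_range_choose] at h2
        calc Nat.centralBinom m ≤ 2 ^ (2 * m) := h2
          _ = 4 ^ m := by rw [pow_mul]; norm_num
      exact_mod_cast h1
    have hpos : (0 : ℝ) < (2 : ℝ)⁻¹ ^ m * a * (c * a) ^ m := by positivity
    calc (2 : ℝ)⁻¹ ^ m * cB m * a * (c * a) ^ m
        ≤ (2 : ℝ)⁻¹ ^ m * 4 ^ m * a * (c * a) ^ m := by
          have hnn : (0 : ℝ) ≤ (2 : ℝ)⁻¹ ^ m := by positivity
          have hnn2 : (0 : ℝ) ≤ a * (c * a) ^ m := by positivity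
          nlinarith [h4, cB_pos m]
      _ = a * (2 * c * a) ^ m := by
          have h24 : (2 : ℝ)⁻¹ ^ m * 4 ^ m = 2 ^ m := by
            rw [← mul_pow]; norm_num
          have h2ca : (2 * c * a) ^ m = 2 ^ m * (c * a) ^ m := by
            rw [← mul_pow]; ring_nf
          rw [h2ca, ← h24]; ring
end

section
/- Suppose nonnegative functions g_m: [0,∞) → ℝ satisfy g_1(t) ≤ K⁽¹⁾(t^M+1)e^{-λt} and, for m ≥ 2, g_m(t) ≤ C ∫₀ᵗ ((t-s)^M+1)e^{-λ(t-s)} · Σ_{l=1}^{m-1} (1/l) g_l(s) g_{m-l}(s) ds, where C, λ, K⁽¹⁾ > 0. Then g_m(t) ≤ K⁽ᵐ⁾(t^M+1)e^{-λt} for all m ≥ 1, where K⁽ᵐ⁾ = C' Σ_{l=1}^{m-1}(1/l)K⁽ˡ⁾K⁽ᵐ⁻ˡ⁾ for m ≥ 2, with C' = C·∫₀^∞ (s^M+1)² e^{-λs} ds. -/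
open Finset

lemma int_pow_exp (n : ℕ) {b : ℝ} (hb : 0 < b) :
    MeasureTheory.IntegrableOn (fun x : ℝ => x ^ n * Real.exp (-b * x)) (Set.Ioi 0) := by
  have h := integrableOn_rpow_mul_exp_neg_mul_rpow (s := (n : ℝ)) (p := 1)
    (by have := Nat.cast_nonneg (α := ℝ) n; linarith) one_pos hb
  refine h.congr_fun (fun x hx => ?_) measurableSet_Ioi
  beta_reduce
  rw [Real.rpow_one, Real.rpow_natCast]

lemma int_sq_exp (M : ℕ) {b : ℝ} (hb : 0 < b) :
    MeasureTheory.IntegrableOn (fun s : ℝ => (s ^ M + 1) ^ 2 * Real.exp (-b * s))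
      (Set.Ioi 0) := by
  have h1 := int_pow_exp (2 * M) hb
  have h2 := (int_pow_exp M hb).const_mul (2:ℝ)
  have h3 := int_pow_exp 0 hb
  have h : MeasureTheory.IntegrableOn (fun x : ℝ =>
      x ^ (2*M) * Real.exp (-b * x) + 2 * (x ^ M * Real.exp (-b * x))
        + x ^ 0 * Real.exp (-b * x)) (Set.Ioi 0) := (h1.add h2).add h3
  refine h.congr_fun (fun x hx => ?_) measurableSet_Ioi
  simp only [pow_zero, one_mul]
  rw [pow_mul]
  ring

/-- Nonnegative functions `g m` satisfying the first-order bound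
`g 1 t ≤ K⁽¹⁾ (t^M + 1) e^{-λ t}` and the quadratic Duhamel recursion bound for `m ≥ 2`
satisfy `g m t ≤ K⁽ᵐ⁾ (t^M + 1) e^{-λ t}`, where `K⁽ᵐ⁾` obeys the recursion with
constant `C' = C ∫₀^∞ (s^M + 1)² e^{-λ s} ds`. -/
theorem inductive_decay_estimate
    (M : ℕ) (C lam K1 : ℝ) (hC : 0 < C) (hlam : 0 < lam) (hK1 : 0 < K1)
    (g : ℕ → ℝ → ℝ) (hgpos : ∀ m : ℕ, ∀ t : ℝ, 0 ≤ t → 0 ≤ g m t)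
    (hg1 : ∀ t : ℝ, 0 ≤ t → g 1 t ≤ K1 * (t ^ M + 1) * Real.exp (-lam * t))
    (hgm : ∀ m : ℕ, 2 ≤ m → ∀ t : ℝ, 0 ≤ t →
      g m t ≤ C * ∫ s in (0 : ℝ)..t,
        ((t - s) ^ M + 1) * Real.exp (-lam * (t - s)) *
          ∑ l ∈ Ico 1 m, (1 / (l : ℝ)) * g l s * g (m - l) s)
    (C' : ℝ)
    (hC' : C' = C * ∫ s in Set.Ioi (0 : ℝ), ((s ^ M + 1) ^ 2 * Real.exp (-lam * s)))
    (K : ℕ → ℝ) (hK1' : K 1 = K1)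
    (hKrec : ∀ m : ℕ, 2 ≤ m →
      K m = C' * ∑ l ∈ Ico 1 m, (1 / (l : ℝ)) * K l * K (m - l)) :
    ∀ m : ℕ, 1 ≤ m → ∀ t : ℝ, 0 ≤ t →
      g m t ≤ K m * (t ^ M + 1) * Real.exp (-lam * t) := by
  have hIoi := int_sq_exp M hlam
  have hC'nn : 0 ≤ C' := by
    rw [hC']
    exact mul_nonneg hC.le (MeasureTheory.integral_nonneg (fun s => by positivity))
  have hKnn : ∀ l : ℕ, 1 ≤ l → 0 ≤ K l := by
    intro l
    induction l using Nat.strong_induction_on with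
    | _ l ih =>
      intro hl
      rcases eq_or_lt_of_le hl with h1 | h2
      · rw [← h1, hK1']; exact hK1.le
      · rw [hKrec l h2]
        refine mul_nonneg hC'nn (Finset.sum_nonneg fun i hi => ?_)
        obtain ⟨hi1, hi2⟩ := Finset.mem_Ico.mp hi
        have h1 : 0 ≤ K i := ih i hi2 hi1
        have h2' : 0 ≤ K (l - i) := ih (l - i) (by omega) (by omega)
        positivity
  intro m
  induction m using Nat.strong_induction_on with
  | _ m ih =>
    intro hm t ht
    rcases eq_or_lt_of_le hm with h1 | hm2
    · rw [← h1, hK1']; exact hg1 t ht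
    -- now 2 ≤ m
    set S : ℝ := ∑ l ∈ Ico 1 m, (1 / (l : ℝ)) * K l * K (m - l) with hSdef
    have hS : 0 ≤ S := by
      refine Finset.sum_nonneg fun i hi => ?_
      obtain ⟨hi1, hi2⟩ := Finset.mem_Ico.mp hi
      have h1 : 0 ≤ K i := hKnn i hi1
      have h2' : 0 ≤ K (m - i) := hKnn (m - i) (by omega)
      positivity
    have hKm : K m = C' * S := hKrec m hm2
    set a : ℝ := (t ^ M + 1) * Real.exp (-lam * t) * S with hadef
    have ha : 0 ≤ a := by
      have : (0:ℝ) ≤ (t ^ M + 1) * Real.exp (-lam * t) := by positivity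
      exact mul_nonneg this hS
    set Fi : ℝ → ℝ := fun s => ((t - s) ^ M + 1) * Real.exp (-lam * (t - s)) *
        ∑ l ∈ Ico 1 m, (1 / (l : ℝ)) * g l s * g (m - l) s with hFidef
    have hbound := hgm m hm2 t ht
    by_cases hInt : IntervalIntegrable Fi MeasureTheory.volume 0 t
    · -- pointwise bound on [0, t]
      have hpt : ∀ s ∈ Set.Icc (0:ℝ) t,
          Fi s ≤ a * ((s ^ M + 1) ^ 2 * Real.exp (-lam * s)) := by
        intro s hs
        obtain ⟨hs0, hst⟩ := hs
        have hsum : ∑ l ∈ Ico 1 m, (1 / (l : ℝ)) * g l s * g (m - l) s ≤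
            S * ((s ^ M + 1) ^ 2 * Real.exp (-lam * s) ^ 2) := by
          rw [hSdef, Finset.sum_mul]
          refine Finset.sum_le_sum fun l hl => ?_
          obtain ⟨hl1, hl2⟩ := Finset.mem_Ico.mp hl
          have hKl : 0 ≤ K l := hKnn l hl1
          have h1 := ih l hl2 hl1 s hs0
          have h2' := ih (m - l) (by omega) (by omega) s hs0
          have hprod : g l s * g (m - l) s ≤
              (K l * (s ^ M + 1) * Real.exp (-lam * s)) *
                (K (m - l) * (s ^ M + 1) * Real.exp (-lam * s)) :=
            mul_le_mul h1 h2' (hgpos (m - l) s hs0) (by positivity)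
          calc (1 / (l:ℝ)) * g l s * g (m - l) s
              = (1 / (l:ℝ)) * (g l s * g (m - l) s) := by ring
            _ ≤ (1 / (l:ℝ)) * ((K l * (s ^ M + 1) * Real.exp (-lam * s)) *
                (K (m - l) * (s ^ M + 1) * Real.exp (-lam * s))) :=
                mul_le_mul_of_nonneg_left hprod (by positivity)
            _ = (1 / (l:ℝ)) * K l * K (m - l) *
                ((s ^ M + 1) ^ 2 * Real.exp (-lam * s) ^ 2) := by ring
        have hpow : (t - s) ^ M + 1 ≤ t ^ M + 1 := by
          have := pow_le_pow_left₀ (by linarith : (0:ℝ) ≤ t - s) (by linarith : t - s ≤ t) M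
          linarith
        have hexp : Real.exp (-lam * (t - s)) * Real.exp (-lam * s) ^ 2 =
            Real.exp (-lam * t) * Real.exp (-lam * s) := by
          rw [sq, ← Real.exp_add, ← Real.exp_add, ← Real.exp_add]
          ring_nf
        have hts : 0 ≤ t - s := by linarith
        have hfac : 0 ≤ ((t - s) ^ M + 1) * Real.exp (-lam * (t - s)) :=
          mul_nonneg (by have := pow_nonneg hts M; linarith) (Real.exp_nonneg _)
        calc Fi s ≤ ((t - s) ^ M + 1) * Real.exp (-lam * (t - s)) *
              (S * ((s ^ M + 1) ^ 2 * Real.exp (-lam * s) ^ 2)) :=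
            mul_le_mul_of_nonneg_left hsum hfac
          _ = ((t - s) ^ M + 1) * (S * (s ^ M + 1) ^ 2 *
              (Real.exp (-lam * (t - s)) * Real.exp (-lam * s) ^ 2)) := by ring
          _ = ((t - s) ^ M + 1) * (S * (s ^ M + 1) ^ 2 *
              (Real.exp (-lam * t) * Real.exp (-lam * s))) := by rw [hexp]
          _ ≤ (t ^ M + 1) * (S * (s ^ M + 1) ^ 2 *
              (Real.exp (-lam * t) * Real.exp (-lam * s))) := by
              refine mul_le_mul_of_nonneg_right hpow ?_
              have : (0:ℝ) ≤ (s ^ M + 1) ^ 2 * (Real.exp (-lam * t) * Real.exp (-lam * s)) := by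
                positivity
              calc (0:ℝ) ≤ S * ((s ^ M + 1) ^ 2 *
                    (Real.exp (-lam * t) * Real.exp (-lam * s))) := mul_nonneg hS this
                _ = S * (s ^ M + 1) ^ 2 * (Real.exp (-lam * t) * Real.exp (-lam * s)) := by ring
          _ = a * ((s ^ M + 1) ^ 2 * Real.exp (-lam * s)) := by rw [hadef]; ring
      have hcont : Continuous fun s : ℝ => a * ((s ^ M + 1) ^ 2 * Real.exp (-lam * s)) := by
        fun_prop
      have hmono : (∫ s in (0:ℝ)..t, Fi s) ≤
          ∫ s in (0:ℝ)..t, a * ((s ^ M + 1) ^ 2 * Real.exp (-lam * s)) :=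
        intervalIntegral.integral_mono_on ht hInt (hcont.intervalIntegrable 0 t) hpt
      have hconstmul : (∫ s in (0:ℝ)..t, a * ((s ^ M + 1) ^ 2 * Real.exp (-lam * s))) =
          a * ∫ s in (0:ℝ)..t, (s ^ M + 1) ^ 2 * Real.exp (-lam * s) :=
        intervalIntegral.integral_const_mul a _
      have htail : (∫ s in (0:ℝ)..t, (s ^ M + 1) ^ 2 * Real.exp (-lam * s)) ≤
          ∫ s in Set.Ioi (0:ℝ), (s ^ M + 1) ^ 2 * Real.exp (-lam * s) := by
        rw [intervalIntegral.integral_of_le ht]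
        refine MeasureTheory.setIntegral_mono_set hIoi ?_ ?_
        · exact Filter.Eventually.of_forall (fun x => by positivity)
        · exact (Set.Ioc_subset_Ioi_self).eventuallyLE
      calc g m t ≤ C * ∫ s in (0:ℝ)..t, Fi s := hbound
        _ ≤ C * (a * ∫ s in (0:ℝ)..t, (s ^ M + 1) ^ 2 * Real.exp (-lam * s)) := by
            rw [← hconstmul]; exact mul_le_mul_of_nonneg_left hmono hC.le
        _ ≤ C * (a * ∫ s in Set.Ioi (0:ℝ), (s ^ M + 1) ^ 2 * Real.exp (-lam * s)) :=
            mul_le_mul_of_nonneg_left (mul_le_mul_of_nonneg_left htail ha) hC.le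
        _ = K m * (t ^ M + 1) * Real.exp (-lam * t) := by
            rw [hKm, hC', hadef]; ring
    · -- integrand not integrable: the interval integral is 0
      have hz : (∫ s in (0:ℝ)..t, Fi s) = 0 := intervalIntegral.integral_undef hInt
      have : g m t ≤ 0 := by
        have := hbound
        rw [show (∫ s in (0:ℝ)..t,
            ((t - s) ^ M + 1) * Real.exp (-lam * (t - s)) *
              ∑ l ∈ Ico 1 m, (1 / (l : ℝ)) * g l s * g (m - l) s) = 0 from hz] at this
        linarith
      have hKmn : 0 ≤ K m := hKnn m hm
      have : (0:ℝ) ≤ K m * (t ^ M + 1) * Real.exp (-lam * t) := by positivity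
      linarith
end
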